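/- arXiv:2004.04033 — 2 statements merged into one kernel-verified Lean document; each statement's English description precedes it below -/
import Mathlib

section
/- Let K ≥ 2, p, θ ∈ [0,1] with λ := θ(Kp-1)/(K-1) ≠ 1, and A as above. For j ∈ {2,...,K}, define the row vector u_j with entries u_j[i] = (1-p)/((K-1)(1-λ)) for i ≠ j and u_j[j] = ((K-1)λ - (K-2) - p)/((K-1)(1-λ)). Then u_jᵀ A = λ u_jᵀ, i.e. u_j is a left eigenvector of A with eigenvalue λ. -/
private lemma sum_ite_one {K : ℕ} (z : Fin K) (x y : ℝ) :
    ∑ k : Fin K, (if k = z then x else y) = x + ((K:ℝ)-1)*y := by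
  have h : ∀ k : Fin K, (if k = z then x else y) = y + (if k = z then x - y else 0) := by
    intro k; split <;> ring
  simp_rw [h]
  rw [Finset.sum_add_distrib, Finset.sum_const, Finset.sum_ite_eq' Finset.univ z (fun _ => x - y)]
  simp [Fintype.card_fin]
  ring

private lemma sum_ite_two {K : ℕ} (z w : Fin K) (hzw : z ≠ w) (x y u : ℝ) :
    ∑ k : Fin K, (if k = z then x else if k = w then y else u)
      = x + y + ((K:ℝ)-2)*u := by
  have h : ∀ k : Fin K, (if k = z then x else if k = w then y else u)
      = u + (if k = z then x - u else 0) + (if k = w then y - u else 0) := by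
    intro k
    by_cases h1 : k = z
    · subst h1; simp [hzw]
    · by_cases h2 : k = w
      · subst h2; simp [Ne.symm hzw]
      · simp [h1, h2]
  simp_rw [h]
  rw [Finset.sum_add_distrib, Finset.sum_add_distrib, Finset.sum_const,
    Finset.sum_ite_eq' Finset.univ z (fun _ => x - u),
    Finset.sum_ite_eq' Finset.univ w (fun _ => y - u)]
  simp [Fintype.card_fin]
  ring

/-- Mean replacement matrix of the generalized Pólya urn associated with the
multidimensional elephant random walk with random tendency. -/
noncomputable def urnMatrix (K : ℕ) (p θ : ℝ) : Matrix (Fin K) (Fin K) ℝ :=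
  Matrix.of fun i j =>
    if i.val = 0 then (if j.val = 0 then p else p + θ * ((1 - K * p) / (K - 1)))
    else if j.val = 0 then (1 - p) / (K - 1)
    else if i = j then (1 - p - θ * (1 - K * p)) / (K - 1)
    else (1 - p) / (K - 1)

private lemma urn_col_sum (K : ℕ) (hK : 2 ≤ K) (p θ : ℝ) (i : Fin K) :
    ∑ k : Fin K, urnMatrix K p θ k i = 1 := by
  have hKR : (2:ℝ) ≤ (K:ℝ) := by exact_mod_cast hK
  have h1 : ((K:ℝ) - 1) ≠ 0 := by linarith
  have hK0 : 0 < K := by omega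
  set z0 : Fin K := ⟨0, hK0⟩ with hz0
  have hz : ∀ k : Fin K, k.val = 0 ↔ k = z0 := by
    intro k
    constructor
    · intro h; exact Fin.ext h
    · intro h; subst h; rfl
  by_cases hi : i.val = 0
  · have h : ∀ k : Fin K, urnMatrix K p θ k i
        = if k = z0 then p else (1 - p) / ((K:ℝ) - 1) := by
      intro k
      by_cases h0 : k = z0
      · have : k.val = 0 := (hz k).mpr h0
        simp [urnMatrix, this, hi, h0, hz0]
      · have : ¬ k.val = 0 := fun hh => h0 ((hz k).mp hh)
        simp [urnMatrix, this, hi, h0]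
    simp_rw [h, sum_ite_one]
    field_simp
    ring
  · have hiz : z0 ≠ i := by
      intro h; apply hi; rw [← h]
    have h : ∀ k : Fin K, urnMatrix K p θ k i
        = if k = z0 then p + θ * ((1 - K * p) / ((K:ℝ) - 1))
          else if k = i then (1 - p - θ * (1 - K * p)) / ((K:ℝ) - 1)
          else (1 - p) / ((K:ℝ) - 1) := by
      intro k
      by_cases h0 : k = z0
      · have : k.val = 0 := (hz k).mpr h0
        simp [urnMatrix, this, hi, h0, hz0]
      · have hk0 : ¬ k.val = 0 := fun hh => h0 ((hz k).mp hh)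
        by_cases h2 : k = i
        · simp [urnMatrix, hk0, hi, h0, h2, Ne.symm hiz]
        · simp [urnMatrix, hk0, hi, h0, h2, Ne.symm hiz]
    simp_rw [h, sum_ite_two z0 i hiz]
    field_simp
    ring

private lemma urn_vecMul_delta (K : ℕ) (hK : 2 ≤ K) (p θ : ℝ) (j : Fin K)
    (a b c : ℝ) (i : Fin K) :
    ∑ k : Fin K, (if k = j then a else b) / c * urnMatrix K p θ k i
      = b / c + (a - b) / c * urnMatrix K p θ j i := by
  have hsplit : ∀ k : Fin K, (if k = j then a else b) / c * urnMatrix K p θ k i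
      = b / c * urnMatrix K p θ k i
        + (if k = j then (a - b) / c * urnMatrix K p θ j i else 0) := by
    intro k
    by_cases h : k = j
    · rw [if_pos h, if_pos h]; subst h; ring
    · rw [if_neg h, if_neg h]; ring
  simp_rw [hsplit]
  rw [Finset.sum_add_distrib, ← Finset.mul_sum, urn_col_sum K hK, mul_one,
    Finset.sum_ite_eq' Finset.univ j (fun _ => (a - b) / c * urnMatrix K p θ j i)]
  simp

/-- For `j ≠ 1`, the row vector `u_j` is a left eigenvector of the mean
replacement matrix with eigenvalue `λ = θ(Kp-1)/(K-1)`. -/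
theorem urnMatrix_left_eigenvector_uj (K : ℕ) (hK : 2 ≤ K) (p θ : ℝ)
    (hp : p ∈ Set.Icc (0 : ℝ) 1) (hθ : θ ∈ Set.Icc (0 : ℝ) 1)
    (hlam : θ * ((K * p - 1) / (K - 1)) ≠ 1)
    (j : Fin K) (hj : j.val ≠ 0) :
    Matrix.vecMul
        (fun i => (if i = j then (K - 1) * (θ * ((K * p - 1) / (K - 1))) - (K - 2) - p
            else 1 - p) / ((K - 1) * (1 - θ * ((K * p - 1) / (K - 1)))))
        (urnMatrix K p θ)
      = (θ * ((K * p - 1) / (K - 1))) •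
        (fun i => (if i = j then (K - 1) * (θ * ((K * p - 1) / (K - 1))) - (K - 2) - p
            else 1 - p) / ((K - 1) * (1 - θ * ((K * p - 1) / (K - 1))))) := by
  have hKR : (2:ℝ) ≤ (K:ℝ) := by exact_mod_cast hK
  have h1 : ((K:ℝ) - 1) ≠ 0 := by linarith
  have h2 : 1 - θ * ((K * p - 1) / ((K:ℝ) - 1)) ≠ 0 := sub_ne_zero.mpr (Ne.symm hlam)
  have h3 : (K:ℝ) - 1 - θ * ((K:ℝ) * p - 1) ≠ 0 := by
    intro h
    apply h2
    field_simp
    linarith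
  funext i
  simp only [Matrix.vecMul, dotProduct, Pi.smul_apply, smul_eq_mul]
  rw [urn_vecMul_delta K hK p θ j _ _ _ i]
  by_cases hij : i = j
  · subst hij
    have hA : urnMatrix K p θ i i = (1 - p - θ * (1 - K * p)) / ((K:ℝ) - 1) := by
      simp [urnMatrix, hj]
    rw [hA, if_pos rfl]
    field_simp [h1, h3]
    ring
  · have hA : urnMatrix K p θ j i = (1 - p) / ((K:ℝ) - 1) := by
      by_cases hi0 : i.val = 0
      · simp [urnMatrix, hj, hi0]
      · have : ¬ j = i := fun h => hij h.symm
        simp [urnMatrix, hj, hi0, this]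
    rw [hA, if_neg hij]
    field_simp [h1, h3]
    ring
end

section
/- Let K ≥ 2, p, θ ∈ [0,1], λ = θ(Kp-1)/(K-1) ≠ 1. Define B = (1/((K-1)+θ(1-Kp))) · diag(p(K-1)+θ(1-Kp), 1-p, ..., 1-p) (a K×K diagonal matrix), and let u_i (i = 2,...,K) be the left eigenvectors defined above. Then for i, j ∈ {2,...,K}: u_iᵀ B u_j = ((1-p)/((K-1)²(1-λ)²))·(p-1) if i ≠ j, and u_iᵀ B u_i = ((1-p)/((K-1)²(1-λ)²))·(p-1+(K-1)(1-λ)). -/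
/-- Quadratic forms `u_iᵀ B u_j` of the matrix
`B = (1/((K-1)+θ(1-Kp)))·diag(p(K-1)+θ(1-Kp), 1-p, …, 1-p)` against the left
eigenvectors `u_i` (`i ≥ 2`): they equal `((1-p)/((K-1)²(1-λ)²))·(p-1)` for
`i ≠ j` and `((1-p)/((K-1)²(1-λ)²))·(p-1+(K-1)(1-λ))` for `i = j`,
with `λ = θ(Kp-1)/(K-1)`. -/
theorem quadratic_forms_uBu (K : ℕ) (hK : 2 ≤ K) (p θ : ℝ)
    (hp : p ∈ Set.Icc (0 : ℝ) 1) (hθ : θ ∈ Set.Icc (0 : ℝ) 1)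
    (hlam : θ * ((K * p - 1) / (K - 1)) ≠ 1)
    (u : Fin K → Fin K → ℝ)
    (hu : ∀ a i, u a i =
      (if i = a then (K - 1) * (θ * ((K * p - 1) / (K - 1))) - (K - 2) - p
        else 1 - p) / ((K - 1) * (1 - θ * ((K * p - 1) / (K - 1)))))
    (B : Matrix (Fin K) (Fin K) ℝ)
    (hB : B = ((K : ℝ) - 1 + θ * (1 - K * p))⁻¹ •
      Matrix.diagonal (fun i : Fin K =>
        if i.val = 0 then p * (K - 1) + θ * (1 - K * p) else 1 - p)) :
    ∀ i j : Fin K, i.val ≠ 0 → j.val ≠ 0 →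
      dotProduct (u i) (B.mulVec (u j)) =
        if i = j then
          (1 - p) / ((K - 1) ^ 2 * (1 - θ * ((K * p - 1) / (K - 1))) ^ 2) *
            (p - 1 + (K - 1) * (1 - θ * ((K * p - 1) / (K - 1))))
        else
          (1 - p) / ((K - 1) ^ 2 * (1 - θ * ((K * p - 1) / (K - 1))) ^ 2) * (p - 1) := by
  intro i j hi hj
  have hKpos : 0 < K := by omega
  have hK1 : (K : ℝ) - 1 ≠ 0 := by
    have : (2:ℝ) ≤ (K:ℝ) := by exact_mod_cast hK
    linarith
  set L : ℝ := θ * ((K * p - 1) / ((K:ℝ) - 1)) with hL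
  have hlam1 : 1 - L ≠ 0 := sub_ne_zero.mpr (fun h => hlam h.symm)
  set D : ℝ := ((K:ℝ) - 1) * (1 - L) with hDdef
  have hDne : D ≠ 0 := mul_ne_zero hK1 hlam1
  have hD : (K:ℝ) - 1 + θ * (1 - K * p) = D := by
    rw [hDdef, hL]; field_simp; ring
  set z : Fin K := ⟨0, hKpos⟩ with hz
  set c : ℝ := ((K:ℝ) - 1) * L - ((K:ℝ) - 2) - p with hc
  set e : ℝ := 1 - p with he
  set d0 : ℝ := p * ((K:ℝ) - 1) + θ * (1 - (K:ℝ) * p) with hd0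
  have hd0' : d0 = ((K:ℝ) - 1) * (p - L) := by
    rw [hd0, hL]; field_simp; ring
  set W : ℝ := D⁻¹ * e * e / D ^ 2 with hW
  set A : ℝ := D⁻¹ * e * e * (c - e) / D ^ 2 with hA
  set C2 : ℝ := D⁻¹ * e * (c - e) ^ 2 / D ^ 2 with hC2
  clear_value W A C2
  rw [hB, hD, Matrix.smul_mulVec]
  have expand : dotProduct (u i)
      (D⁻¹ • (Matrix.diagonal (fun k : Fin K =>
        if k.val = 0 then d0 else e)).mulVec (u j)) =
      ∑ k : Fin K, (e * W + (if k = z then d0 * W - e * W else 0)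
        + (if k = i then A else 0) + (if k = j then A else 0)
        + (if k = i then (if k = j then C2 else 0) else 0)) := by
    clear_value L D c e d0
    rw [dotProduct]
    refine Finset.sum_congr rfl fun k _ => ?_
    simp only [Pi.smul_apply, Matrix.mulVec_diagonal, smul_eq_mul, hu]
    have hval : (k.val = 0) ↔ (k = z) := ⟨fun h => Fin.ext h, fun h => by rw [h]⟩
    simp only [hval]
    by_cases hki : k = i
    · have h0 : ¬ (k = z) := fun h => hi (by rw [← hki, h])
      by_cases hkj : k = j
      · simp only [if_pos hki, if_pos hkj, if_neg h0]
        rw [hW, hA, hC2]; ring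
      · simp only [if_pos hki, if_neg hkj, if_neg h0]
        rw [hW, hA]; ring
    · by_cases hkj : k = j
      · have h0 : ¬ (k = z) := fun h => hj (by rw [← hkj, h])
        simp only [if_pos hkj, if_neg h0, if_neg hki]
        rw [hW, hA]; ring
      · by_cases h0 : k = z
        · simp only [if_pos h0, if_neg hki, if_neg hkj]
          rw [hW]; ring
        · simp only [if_neg h0, if_neg hki, if_neg hkj]
          rw [hW]; ring
  rw [expand]
  rw [Finset.sum_add_distrib, Finset.sum_add_distrib, Finset.sum_add_distrib,
    Finset.sum_add_distrib, Finset.sum_const, Finset.sum_ite_eq', Finset.sum_ite_eq',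
    Finset.sum_ite_eq', Finset.sum_ite_eq']
  simp only [Finset.mem_univ, if_true, Finset.card_univ, Fintype.card_fin, nsmul_eq_mul]
  clear_value L
  by_cases hij : i = j
  · rw [if_pos hij, if_pos hij]
    rw [hW, hA, hC2, hc, hd0', hDdef, he]
    field_simp
    ring
  · rw [if_neg hij, if_neg hij]
    rw [hW, hA, hc, hd0', hDdef, he]
    field_simp
    ring
end
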